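/- In a nearest-neighbor SFT X_F, every locally admissible finite configuration supported on a finite subset of Z^2 is globally admissible (extends to a point of X_F), provided X_F satisfies SSF. -/

import Mathlib

/-- Local admissibility on a set `S` of sites. -/
def AdmOn {A : Type*} (Fh Fv : Set (A × A)) (S : Set (ℤ × ℤ)) (x : ℤ × ℤ → A) : Prop :=
  ∀ u : ℤ × ℤ, u ∈ S →
    ((u + (1, 0)) ∈ S → (x u, x (u + (1, 0))) ∉ Fh) ∧
    ((u + (0, 1)) ∈ S → (x u, x (u + (0, 1))) ∉ Fv)

/-- The nearest-neighbor SFT defined by `Fh`, `Fv`. -/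
def XF {A : Type*} (Fh Fv : Set (A × A)) : Set (ℤ × ℤ → A) :=
  {x | ∀ u : ℤ × ℤ, (x u, x (u + (1, 0))) ∉ Fh ∧ (x u, x (u + (0, 1))) ∉ Fv}

/-- Single-site fillability. -/
def SSF {A : Type*} (Fh Fv : Set (A × A)) : Prop :=
  ∀ wr wl wu wd : A, ∃ a : A, (a, wr) ∉ Fh ∧ (wl, a) ∉ Fh ∧ (a, wu) ∉ Fv ∧ (wd, a) ∉ Fv

open Classical in
/-- Fill sites of `ℤ × ℤ` one by one in the order given by `e`, using SSF. -/
noncomputable def fillF {A : Type*} (Fh Fv : Set (A × A)) (hssf : SSF Fh Fv)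
    (w : ℤ × ℤ → A) (S : Set (ℤ × ℤ)) (d : A) (e : ℕ ≃ (ℤ × ℤ)) : ℕ → A
  | n =>
    if e n ∈ S then w (e n) else
      (hssf
        (if (e n + (1, 0)) ∈ S then w (e n + (1, 0)) else
          if h : e.symm (e n + (1, 0)) < n then fillF Fh Fv hssf w S d e (e.symm (e n + (1, 0))) else d)
        (if (e n + (-1, 0)) ∈ S then w (e n + (-1, 0)) else
          if h : e.symm (e n + (-1, 0)) < n then fillF Fh Fv hssf w S d e (e.symm (e n + (-1, 0))) else d)
        (if (e n + (0, 1)) ∈ S then w (e n + (0, 1)) else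
          if h : e.symm (e n + (0, 1)) < n then fillF Fh Fv hssf w S d e (e.symm (e n + (0, 1))) else d)
        (if (e n + (0, -1)) ∈ S then w (e n + (0, -1)) else
          if h : e.symm (e n + (0, -1)) < n then fillF Fh Fv hssf w S d e (e.symm (e n + (0, -1))) else d)).choose
  decreasing_by all_goals exact h

open Classical in
/-- Value visible at stage `n` at site `u`. -/
noncomputable def valA {A : Type*} (Fh Fv : Set (A × A)) (hssf : SSF Fh Fv)
    (w : ℤ × ℤ → A) (S : Set (ℤ × ℤ)) (d : A) (e : ℕ ≃ (ℤ × ℤ)) (n : ℕ) (u : ℤ × ℤ) : A :=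
  if u ∈ S then w u else
    if _h : e.symm u < n then fillF Fh Fv hssf w S d e (e.symm u) else d

open Classical in
theorem fillF_eq {A : Type*} (Fh Fv : Set (A × A)) (hssf : SSF Fh Fv)
    (w : ℤ × ℤ → A) (S : Set (ℤ × ℤ)) (d : A) (e : ℕ ≃ (ℤ × ℤ)) (n : ℕ) :
    fillF Fh Fv hssf w S d e n =
      if e n ∈ S then w (e n) else
        (hssf (valA Fh Fv hssf w S d e n (e n + (1, 0)))
          (valA Fh Fv hssf w S d e n (e n + (-1, 0)))
          (valA Fh Fv hssf w S d e n (e n + (0, 1)))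
          (valA Fh Fv hssf w S d e n (e n + (0, -1)))).choose := by
  rw [fillF]
  rfl

theorem stmt9 {A : Type*} [Fintype A] (Fh Fv : Set (A × A)) (hssf : SSF Fh Fv)
    (S : Finset (ℤ × ℤ)) (w : ℤ × ℤ → A) (hw : AdmOn Fh Fv (↑S) w) :
    ∃ x ∈ XF Fh Fv, ∀ u ∈ S, x u = w u := by
  classical
  set d : A := w (0, 0) with hd
  set e : ℕ ≃ (ℤ × ℤ) := (Denumerable.eqv (ℤ × ℤ)).symm with he
  set Sc : Set (ℤ × ℤ) := (↑S : Set (ℤ × ℤ)) with hSc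
  set g : ℕ → A := fillF Fh Fv hssf w Sc d e with hg
  set x : (ℤ × ℤ) → A := fun u => if u ∈ Sc then w u else g (e.symm u) with hx
  have hxS : ∀ u ∈ Sc, x u = w u := fun u hu => if_pos hu
  -- valA agrees with x when visible
  have hval : ∀ n : ℕ, ∀ u : ℤ × ℤ, (u ∈ Sc ∨ e.symm u < n) →
      valA Fh Fv hssf w Sc d e n u = x u := by
    intro n u hu
    by_cases h1 : u ∈ Sc
    · rw [valA, if_pos h1, hxS u h1]
    · rcases hu with h | h
      · exact absurd h h1
      · rw [valA, if_neg h1, dif_pos h, hx]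
        simp [h1]
        rfl
  -- the fill at a non-S site satisfies the SSF spec
  have hfill : ∀ n : ℕ, e n ∉ Sc →
      (x (e n), valA Fh Fv hssf w Sc d e n (e n + (1, 0))) ∉ Fh ∧
      (valA Fh Fv hssf w Sc d e n (e n + (-1, 0)), x (e n)) ∉ Fh ∧
      (x (e n), valA Fh Fv hssf w Sc d e n (e n + (0, 1))) ∉ Fv ∧
      (valA Fh Fv hssf w Sc d e n (e n + (0, -1)), x (e n)) ∉ Fv := by
    intro n hn
    have hxn : x (e n) = g n := by rw [hx]; simp [hn]
    rw [hxn, hg, fillF_eq, if_neg hn]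
    exact (hssf _ _ _ _).choose_spec
  -- generic one-direction argument
  have key : ∀ (F : Set (A × A)) (δ : ℤ × ℤ), δ ≠ 0 →
      (∀ n : ℕ, e n ∉ Sc → (x (e n), valA Fh Fv hssf w Sc d e n (e n + δ)) ∉ F) →
      (∀ n : ℕ, e n ∉ Sc → (valA Fh Fv hssf w Sc d e n (e n + -δ), x (e n)) ∉ F) →
      (∀ u ∈ Sc, u + δ ∈ Sc → (w u, w (u + δ)) ∉ F) →
      ∀ u : ℤ × ℤ, (x u, x (u + δ)) ∉ F := by
    intro F δ hδ hR hL hS u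
    set v : ℤ × ℤ := u + δ with hv
    have hvu : v + -δ = u := add_neg_cancel_right u δ
    have huv : u ≠ v := by
      intro h
      exact hδ (left_eq_add.mp h)
    by_cases hu : u ∈ Sc <;> by_cases hv2 : v ∈ Sc
    · rw [hxS u hu, hxS v hv2]
      exact hS u hu hv2
    · -- u ∈ Sc, v ∉ Sc : use the fill at v
      have hm : e (e.symm v) ∉ Sc := by rwa [e.apply_symm_apply]
      have hh := hL (e.symm v) hm
      rw [e.apply_symm_apply, hvu, hval _ u (Or.inl hu)] at hh
      exact hh
    · -- u ∉ Sc, v ∈ Sc : use the fill at u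
      have hn : e (e.symm u) ∉ Sc := by rwa [e.apply_symm_apply]
      have hh := hR (e.symm u) hn
      rw [e.apply_symm_apply, hval _ v (Or.inl hv2)] at hh
      exact hh
    · -- neither in Sc : use the later of the two
      have hnm : e.symm u ≠ e.symm v := fun h => huv (by simpa using congrArg e h)
      rcases hnm.lt_or_gt with h | h
      · have hm : e (e.symm v) ∉ Sc := by rwa [e.apply_symm_apply]
        have hh := hL (e.symm v) hm
        rw [e.apply_symm_apply, hvu, hval _ u (Or.inr h)] at hh
        exact hh
      · have hn : e (e.symm u) ∉ Sc := by rwa [e.apply_symm_apply]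
        have hh := hR (e.symm u) hn
        rw [e.apply_symm_apply, hval _ v (Or.inr h)] at hh
        exact hh
  refine ⟨x, ?_, fun u hu => hxS u (by exact_mod_cast hu)⟩
  intro u
  have hneg1 : (-(1, 0) : ℤ × ℤ) = (-1, 0) := by simp [Prod.ext_iff]
  have hneg2 : (-(0, 1) : ℤ × ℤ) = (0, -1) := by simp [Prod.ext_iff]
  constructor
  · refine key Fh (1, 0) (by simp [Prod.ext_iff]) (fun n hn => (hfill n hn).1) ?_
      (fun u hu h2 => (hw u hu).1 h2) u
    intro n hn
    rw [hneg1]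
    exact (hfill n hn).2.1
  · refine key Fv (0, 1) (by simp [Prod.ext_iff]) (fun n hn => (hfill n hn).2.2.1) ?_
      (fun u hu h2 => (hw u hu).2 h2) u
    intro n hn
    rw [hneg2]
    exact (hfill n hn).2.2.2
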